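/- arXiv:1311.2613 — 4 statements merged into one kernel-verified Lean document; each statement's English description precedes it below -/
import Mathlib

section
/- Kernel inequality: For every real number w > 0 with w ≠ 1, one has −w·log|(w+1)/(w−1)| − (1/w)·log|(w+1)/(w−1)| + 2 ≤ 0; equivalently, (w + 1/w)·log|(w+1)/(w−1)| ≥ 2. -/
lemma kernel_aux (t : ℝ) (h0 : 0 ≤ t) (h1 : t < 1) :
    2 * t ≤ Real.log ((1 + t) / (1 - t)) := by
  have h1t : (0:ℝ) < 1 - t := by linarith
  set f : ℝ → ℝ := fun x => Real.log (1 + x) - Real.log (1 - x) - 2 * x with hf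
  have hderiv : ∀ x : ℝ, -1 < x → x < 1 →
      HasDerivAt f (1 / (1 + x) + 1 / (1 - x) - 2) x := by
    intro x hx1 hx2
    have ha : HasDerivAt (fun y : ℝ => 1 + y) 1 x := (hasDerivAt_id x).const_add 1
    have hb' : HasDerivAt (fun y : ℝ => 1 - y) (-1) x := by
      have := (hasDerivAt_id x).neg.const_add (1 : ℝ)
      simpa [sub_eq_add_neg] using this
    have hla : HasDerivAt (fun y : ℝ => Real.log (1 + y)) (1 / (1 + x)) x := by
      have := ha.log (by linarith)
      simpa [one_div] using this
    have hlb : HasDerivAt (fun y : ℝ => Real.log (1 - y)) (-1 / (1 - x)) x :=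
      hb'.log (by linarith)
    have hc : HasDerivAt (fun y : ℝ => 2 * y) 2 x := by
      simpa using (hasDerivAt_id x).const_mul (2 : ℝ)
    have := (hla.sub hlb).sub hc
    refine this.congr_deriv ?_
    ring
  have hmono : MonotoneOn f (Set.Icc 0 t) := by
    apply monotoneOn_of_deriv_nonneg (convex_Icc 0 t)
    · apply ContinuousOn.sub
      apply ContinuousOn.sub
      · apply Real.continuousOn_log.comp (by fun_prop)
        intro x hx
        simp only [Set.mem_Icc] at hx
        have : (0:ℝ) < 1 + x := by linarith [hx.1]
        simp [Set.mem_compl_iff, this.ne']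
      · apply Real.continuousOn_log.comp (by fun_prop)
        intro x hx
        simp only [Set.mem_Icc] at hx
        have : (0:ℝ) < 1 - x := by linarith [hx.2]
        simp [Set.mem_compl_iff, this.ne']
      · fun_prop
    · intro x hx
      rw [interior_Icc] at hx
      exact ((hderiv x (by linarith [hx.1]) (by linarith [hx.2])).differentiableAt).differentiableWithinAt
    · intro x hx
      rw [interior_Icc] at hx
      obtain ⟨hx1, hx2⟩ := hx
      have hd := (hderiv x (by linarith) (by linarith)).deriv
      rw [hd]
      have hp1 : (0:ℝ) < 1 + x := by linarith
      have hp2 : (0:ℝ) < 1 - x := by linarith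
      rw [div_add_div _ _ hp1.ne' hp2.ne', sub_nonneg]
      rw [le_div_iff₀ (by positivity)]
      nlinarith
  have hft : f 0 ≤ f t := hmono (by simp [h0]) (by simp [h0]) h0
  have hf0 : f 0 = 0 := by simp [hf]
  rw [Real.log_div (by linarith) h1t.ne']
  simp only [hf] at hft hf0
  linarith
/-- **Kernel inequality.**
For every real `w > 0` with `w ≠ 1`:
`−w log|(w+1)/(w−1)| − (1/w) log|(w+1)/(w−1)| + 2 ≤ 0`; equivalently
`(w + 1/w) log|(w+1)/(w−1)| ≥ 2`. -/
theorem kernel_inequality (w : ℝ) (hw : 0 < w) (hw1 : w ≠ 1) :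
    (-(w * Real.log |(w + 1) / (w - 1)|)
        - (1 / w) * Real.log |(w + 1) / (w - 1)| + 2 ≤ 0) ∧
    (2 ≤ (w + 1 / w) * Real.log |(w + 1) / (w - 1)|) := by
  have key : 2 ≤ (w + 1 / w) * Real.log |(w + 1) / (w - 1)| := by
    rcases lt_or_gt_of_ne hw1 with h | h
    · -- w < 1
      have habs : |(w + 1) / (w - 1)| = (1 + w) / (1 - w) := by
        rw [abs_div, abs_of_pos (by linarith), abs_of_neg (by linarith)]
        ring_nf
      rw [habs]
      have hL := kernel_aux w hw.le h
      have hpos : 0 < w + 1 / w := by positivity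
      have h2 : (w + 1 / w) * (2 * w) ≤ (w + 1 / w) * Real.log ((1 + w) / (1 - w)) :=
        mul_le_mul_of_nonneg_left hL hpos.le
      have h3 : (w + 1 / w) * (2 * w) = 2 * w ^ 2 + 2 := by
        field_simp
      nlinarith
    · -- w > 1
      have habs : |(w + 1) / (w - 1)| = (1 + 1/w) / (1 - 1/w) := by
        have hne : w - 1 ≠ 0 := by linarith
        rw [abs_div, abs_of_pos (by linarith), abs_of_pos (by linarith)]
        field_simp
      rw [habs]
      have ht0 : 0 ≤ 1 / w := by positivity
      have ht1 : 1 / w < 1 := by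
        rw [div_lt_one hw]; linarith
      have hL := kernel_aux (1/w) ht0 ht1
      have hpos : 0 < w + 1 / w := by positivity
      have h2 : (w + 1 / w) * (2 * (1/w)) ≤ (w + 1 / w) * Real.log ((1 + 1/w) / (1 - 1/w)) :=
        mul_le_mul_of_nonneg_left hL hpos.le
      have h3 : (w + 1 / w) * (2 * (1/w)) = 2 + 2 / w ^ 2 := by
        field_simp
      have h4 : (0:ℝ) ≤ 2 / w ^ 2 := by positivity
      linarith
  constructor
  · nlinarith [key]
  · exact key
end

section
/- Representation and negativity of the velocity field: Let L > 0, μ = π/L, and let ω be a continuous L-periodic function that is odd about z = 0, i.e., ω(L−y) = −ω(y) for all y ∈ [0,L]. Define v(z) = (1/π) ∫₀^L ω(y) log|sin(μ(z−y))| dy. Then for every z ∈ (0, L/2), v(z) = (1/π) ∫₀^{L/2} ω(y) log|(tan(μz) − tan(μy))/(tan(μz) + tan(μy))| dy; moreover, if in addition ω > 0 on (0, L/2), then v(z) < 0 for every z ∈ (0, L/2). -/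
open MeasureTheory Set Real

private lemma log_abs_intInt (a b : ℝ) :
    IntervalIntegrable (fun t : ℝ => Real.log |t|) volume a b := by
  have key : ∀ c : ℝ, 0 ≤ c → IntervalIntegrable (fun t : ℝ => Real.log |t|) volume 0 c := by
    intro c hc
    have hg : IntervalIntegrable
        (fun x : ℝ => 2 * x ^ (-(1/2) : ℝ) + 2 * x ^ ((1/2) : ℝ)) volume 0 c :=
      ((intervalIntegral.intervalIntegrable_rpow' (by norm_num)).const_mul 2).add
        ((intervalIntegral.intervalIntegrable_rpow' (by norm_num)).const_mul 2)
    refine hg.mono_fun' ((Real.measurable_log.comp measurable_abs).aestronglyMeasurable) ?_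
    rw [Filter.EventuallyLE, ae_restrict_iff' measurableSet_uIoc]
    refine Filter.Eventually.of_forall fun x hx => ?_
    rw [uIoc_of_le hc] at hx
    obtain ⟨hx0, hxc⟩ := hx
    rw [Real.norm_eq_abs, abs_of_pos hx0]
    have hrp : (0:ℝ) ≤ x ^ ((1/2) : ℝ) := Real.rpow_nonneg hx0.le _
    have hrn : (0:ℝ) ≤ x ^ (-(1/2) : ℝ) := Real.rpow_nonneg hx0.le _
    rcases le_total x 1 with hx1 | hx1
    · have h1 : |Real.log x| = -Real.log x := abs_of_nonpos (Real.log_nonpos hx0.le hx1)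
      have h2 : -Real.log x = 2 * Real.log (x ^ (-(1/2) : ℝ)) := by
        rw [Real.log_rpow hx0]; ring
      have h3 : Real.log (x ^ (-(1/2) : ℝ)) ≤ x ^ (-(1/2) : ℝ) :=
        (Real.log_le_sub_one_of_pos (Real.rpow_pos_of_pos hx0 _)).trans (by linarith)
      rw [h1, h2]; linarith
    · have h1 : |Real.log x| = Real.log x := abs_of_nonneg (Real.log_nonneg hx1)
      have h2 : Real.log x = 2 * Real.log (x ^ ((1/2) : ℝ)) := by
        rw [Real.log_rpow (by linarith)]; ring
      have h3 : Real.log (x ^ ((1/2) : ℝ)) ≤ x ^ ((1/2) : ℝ) :=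
        (Real.log_le_sub_one_of_pos (Real.rpow_pos_of_pos (by linarith) _)).trans (by linarith)
      rw [h1, h2]; linarith
  have all0 : ∀ c : ℝ, IntervalIntegrable (fun t : ℝ => Real.log |t|) volume 0 c := by
    intro c
    rcases le_total 0 c with hc | hc
    · exact key c hc
    · rw [IntervalIntegrable.iff_comp_neg]
      simp only [abs_neg, neg_zero]
      exact key (-c) (by linarith)
  exact (all0 a).symm.trans (all0 b)


private lemma logsin_meas : Measurable (fun t : ℝ => Real.log |Real.sin t|) :=
  Real.measurable_log.comp (measurable_abs.comp Real.measurable_sin)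

private lemma logsin_base :
    IntervalIntegrable (fun t : ℝ => Real.log |Real.sin t|) volume (-(π/2)) (π/2) := by
  have hg : IntervalIntegrable (fun t : ℝ => Real.log (π/2) - Real.log |t|)
      volume (-(π/2)) (π/2) := intervalIntegrable_const.sub (log_abs_intInt _ _)
  refine hg.mono_fun' logsin_meas.aestronglyMeasurable ?_
  rw [Filter.EventuallyLE, ae_restrict_iff' measurableSet_uIoc]
  refine Filter.Eventually.of_forall fun x hx => ?_
  have hpi : (0:ℝ) < π := Real.pi_pos
  have hx2 : |x| ≤ π/2 := by
    rw [uIoc_of_le (by linarith : -(π/2) ≤ π/2)] at hx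
    rw [abs_le]; exact ⟨hx.1.le, hx.2⟩
  by_cases hx0 : x = 0
  · subst hx0
    simp only [Real.sin_zero, abs_zero, Real.log_zero, norm_zero, sub_zero]
    exact Real.log_nonneg (by nlinarith [Real.pi_gt_three])
  · have hxpos : 0 < |x| := abs_pos.mpr hx0
    have hsinne : Real.sin x ≠ 0 := by
      intro h
      exact hx0 ((Real.sin_eq_zero_iff_of_lt_of_lt (by linarith [abs_le.mp hx2])
        (by linarith [abs_le.mp hx2])).mp h)
    have hsinpos : 0 < |Real.sin x| := abs_pos.mpr hsinne
    have hle1 : |Real.sin x| ≤ 1 := abs_le.mpr ⟨Real.neg_one_le_sin x, Real.sin_le_one x⟩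
    have jordan : 2/π * |x| ≤ |Real.sin x| := Real.mul_abs_le_abs_sin hx2
    have h1 : ‖Real.log |Real.sin x|‖ = -Real.log |Real.sin x| := by
      rw [Real.norm_eq_abs]
      exact abs_of_nonpos (Real.log_nonpos (abs_nonneg _) hle1)
    have h2 : Real.log (2/π * |x|) ≤ Real.log |Real.sin x| :=
      Real.log_le_log (by positivity) jordan
    have h3 : Real.log (2/π * |x|) = -Real.log (π/2) + Real.log |x| := by
      rw [Real.log_mul (by positivity) (ne_of_gt hxpos)]
      rw [show (2:ℝ)/π = (π/2)⁻¹ by field_simp, Real.log_inv]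
    rw [h1]; linarith


private lemma logsin_intInt (a b : ℝ) :
    IntervalIntegrable (fun t : ℝ => Real.log |Real.sin t|) volume a b := by
  set f : ℝ → ℝ := fun t => Real.log |Real.sin t| with hf
  have hpi : (0:ℝ) < π := Real.pi_pos
  have hper : Function.Periodic f π := fun x => by
    simp only [hf, Real.sin_add_pi, abs_neg]
  have seg : ∀ n : ℕ, IntervalIntegrable f volume (-(π/2) + n*π) (-(π/2) + n*π + π) := by
    intro n
    have h2 : IntervalIntegrable (fun x => f (x - n*π)) volume
        (-(π/2) + n*π) (π/2 + n*π) := logsin_base.comp_sub_right _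
    have h3 : (fun x : ℝ => f (x - n*π)) = f := funext fun x => by
      have := (hper.nat_mul n).sub_eq x
      simpa using this
    rw [h3] at h2
    rwa [show (π/2:ℝ) + n*π = -(π/2) + n*π + π by ring] at h2
  have chainR : ∀ n : ℕ, IntervalIntegrable f volume (-(π/2)) (-(π/2) + n*π) := by
    intro n
    induction n with
    | zero => simpa using IntervalIntegrable.refl (f := f) (μ := volume) (a := -(π/2))
    | succ n ih =>
        have := ih.trans (seg n)
        rwa [show -(π/2) + (n:ℝ)*π + π = -(π/2) + ((n:ℕ)+1:ℕ)*π by push_cast; ring] at this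
  have heven : ∀ x : ℝ, f (-x) = f x := fun x => by
    simp only [hf, Real.sin_neg, abs_neg]
  have chainL : ∀ n : ℕ, IntervalIntegrable f volume (π/2 - n*π) (π/2) := by
    intro n
    have h := chainR n
    rw [IntervalIntegrable.iff_comp_neg] at h
    have h2 : (fun x : ℝ => f (-x)) = f := funext heven
    rw [h2] at h
    have := h.symm
    rwa [show -(-(π/2) + (n:ℝ)*π) = π/2 - n*π by ring, show -(-(π/2)) = π/2 by ring] at this
  -- combine: for n ≥ 1, integrable on (π/2 - nπ, -(π/2) + nπ)
  obtain ⟨n, hn⟩ := exists_nat_ge ((|a| + |b|)/π + 1)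
  have hnπ : |a| + |b| + π ≤ n * π := by
    have := (div_le_iff₀ hpi).mp (by linarith : (|a| + |b|)/π ≤ (n:ℝ) - 1)
    linarith
  have hn1 : (1:ℝ) ≤ n := by
    have : (0:ℝ) ≤ (|a|+|b|)/π := by positivity
    linarith
  have piece1 : IntervalIntegrable f volume (π/2 - n*π) (-(π/2)) := by
    refine (chainL n).mono_set ?_
    apply uIcc_subset_uIcc
    all_goals rw [mem_uIcc]; left
    all_goals constructor <;>
      linarith [abs_nonneg a, abs_nonneg b, neg_abs_le a, le_abs_self a, neg_abs_le b,
        le_abs_self b]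
  have total : IntervalIntegrable f volume (π/2 - n*π) (-(π/2) + n*π) :=
    piece1.trans (chainR n)
  refine total.mono_set (uIcc_subset_uIcc ?_ ?_)
  all_goals rw [mem_uIcc]; left
  all_goals constructor <;>
    linarith [abs_nonneg a, abs_nonneg b, neg_abs_le a, le_abs_self a, neg_abs_le b,
      le_abs_self b]


private lemma intInt_affine {f : ℝ → ℝ} (hf : ∀ a b, IntervalIntegrable f volume a b)
    (c d a b : ℝ) : IntervalIntegrable (fun y => f (c + d * y)) volume a b := by
  rcases eq_or_ne d 0 with h | h
  · simpa [h] using intervalIntegrable_const (c := f c) (μ := volume) (a := a) (b := b)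
  · have h1 : ∀ a' b' : ℝ, IntervalIntegrable (fun x => f (c + x)) volume a' b' := by
      intro a' b'
      simpa using (hf (c + a') (c + b')).comp_add_left c
    have h2 := (h1 (d * a) (d * b)).comp_mul_left (c := d)
    rwa [mul_div_cancel_left₀ _ h, mul_div_cancel_left₀ _ h] at h2

private lemma sin_ratio_eq {a b : ℝ} (ha0 : 0 < a) (ha2 : a < π/2)
    (hb0 : 0 ≤ b) (hb2 : b < π/2) (hab : a ≠ b) :
    Real.log |Real.sin (a - b)| - Real.log |Real.sin (a + b)|
      = Real.log |(Real.tan a - Real.tan b) / (Real.tan a + Real.tan b)| := by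
  have hpi : (0:ℝ) < π := Real.pi_pos
  have hca : 0 < Real.cos a := Real.cos_pos_of_mem_Ioo ⟨by linarith, ha2⟩
  have hcb : 0 < Real.cos b := Real.cos_pos_of_mem_Ioo ⟨by linarith, hb2⟩
  have hsub_ne : Real.sin (a - b) ≠ 0 := by
    intro h
    have := (Real.sin_eq_zero_iff_of_lt_of_lt (by linarith) (by linarith)).mp h
    exact hab (by linarith [sub_eq_zero.mp this])
  have hadd_pos : 0 < Real.sin (a + b) := Real.sin_pos_of_pos_of_lt_pi (by linarith) (by linarith)
  have id1 : Real.sin (a - b) = Real.cos a * Real.cos b * (Real.tan a - Real.tan b) := by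
    rw [Real.sin_sub, Real.tan_eq_sin_div_cos, Real.tan_eq_sin_div_cos]
    field_simp
  have id2 : Real.sin (a + b) = Real.cos a * Real.cos b * (Real.tan a + Real.tan b) := by
    rw [Real.sin_add, Real.tan_eq_sin_div_cos, Real.tan_eq_sin_div_cos]
    field_simp
  rw [← Real.log_div (abs_ne_zero.mpr hsub_ne) (abs_ne_zero.mpr hadd_pos.ne'), ← abs_div]
  congr 2
  rw [id1, id2, mul_div_mul_left _ _ (mul_pos hca hcb).ne']

private lemma sin_ratio_lt {a b : ℝ} (ha0 : 0 < a) (ha2 : a < π/2)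
    (hb0 : 0 < b) (hb2 : b < π/2) (hab : a ≠ b) :
    0 < |Real.sin (a - b)| ∧ |Real.sin (a - b)| < |Real.sin (a + b)| := by
  have hpi : (0:ℝ) < π := Real.pi_pos
  have hsub_ne : Real.sin (a - b) ≠ 0 := by
    intro h
    have := (Real.sin_eq_zero_iff_of_lt_of_lt (by linarith) (by linarith)).mp h
    exact hab (by linarith [sub_eq_zero.mp this])
  refine ⟨abs_pos.mpr hsub_ne, ?_⟩
  have hca : 0 < Real.cos a := Real.cos_pos_of_mem_Ioo ⟨by linarith, ha2⟩
  have hcb : 0 < Real.cos b := Real.cos_pos_of_mem_Ioo ⟨by linarith, hb2⟩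
  have hsa : 0 < Real.sin a := Real.sin_pos_of_pos_of_lt_pi ha0 (by linarith)
  have hsb : 0 < Real.sin b := Real.sin_pos_of_pos_of_lt_pi hb0 (by linarith)
  have hadd_pos : 0 < Real.sin (a + b) := Real.sin_pos_of_pos_of_lt_pi (by linarith) (by linarith)
  rw [abs_of_pos hadd_pos, abs_lt]
  rw [Real.sin_add] at hadd_pos ⊢
  rw [Real.sin_sub]
  constructor <;> nlinarith


/-- **Representation and negativity of the velocity field.**
Let `L > 0`, `μ = π/L`, and let `ω` be continuous, `L`-periodic, and odd about `z = 0`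
(`ω(L − y) = −ω(y)`).  Set `v(z) = (1/π) ∫₀^L ω(y) log|sin(μ(z−y))| dy`.  Then for every
`z ∈ (0, L/2)`:
`v(z) = (1/π) ∫₀^{L/2} ω(y) log|(tan(μz) − tan(μy))/(tan(μz) + tan(μy))| dy`, and if
moreover `ω > 0` on `(0, L/2)`, then `v(z) < 0`. -/
theorem velocity_representation_and_negativity
    (L : ℝ) (hL : 0 < L) (ω : ℝ → ℝ)
    (hcont : Continuous ω) (hper : Function.Periodic ω L)
    (hodd : ∀ y ∈ Icc (0:ℝ) L, ω (L - y) = -ω y) :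
    ∀ z ∈ Ioo (0:ℝ) (L / 2),
      ((1 / π) * ∫ y in (0:ℝ)..L, ω y * Real.log |Real.sin (π / L * (z - y))|
        = (1 / π) * ∫ y in (0:ℝ)..(L / 2),
            ω y * Real.log |(Real.tan (π / L * z) - Real.tan (π / L * y))
                / (Real.tan (π / L * z) + Real.tan (π / L * y))|) ∧
      ((∀ x ∈ Ioo (0:ℝ) (L / 2), 0 < ω x) →
        (1 / π) * (∫ y in (0:ℝ)..L, ω y * Real.log |Real.sin (π / L * (z - y))|) < 0) := by
  intro z hz
  obtain ⟨hz0, hz2⟩ := hz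
  have hpi : (0:ℝ) < π := Real.pi_pos
  set μ : ℝ := π / L with hμdef
  have hμ : 0 < μ := div_pos hpi hL
  have hμL : μ * L = π := by rw [hμdef, div_mul_cancel₀ _ hL.ne']
  set F : ℝ → ℝ := fun y => ω y * Real.log |Real.sin (μ * (z - y))| with hF
  set G : ℝ → ℝ := fun y => ω y * Real.log |Real.sin (μ * (z + y))| with hG
  set R : ℝ → ℝ := fun y =>
    ω y * Real.log |(Real.tan (μ * z) - Real.tan (μ * y))
      / (Real.tan (μ * z) + Real.tan (μ * y))| with hR
  -- integrabilities
  have intF : ∀ a b : ℝ, IntervalIntegrable F volume a b := by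
    intro a b
    have h1 : IntervalIntegrable (fun y => Real.log |Real.sin (μ * z + (-μ) * y)|) volume a b :=
      intInt_affine logsin_intInt (μ * z) (-μ) a b
    have h2 := h1.continuousOn_mul hcont.continuousOn
    have hEq : F = fun y => ω y * Real.log |Real.sin (μ * z + (-μ) * y)| := by
      funext y
      simp only [hF]
      rw [ show μ * (z - y) = μ * z + (-μ) * y by ring]
    rw [hEq]
    exact h2
  have intG : ∀ a b : ℝ, IntervalIntegrable G volume a b := by
    intro a b
    have h1 : IntervalIntegrable (fun y => Real.log |Real.sin (μ * z + μ * y)|) volume a b :=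
      intInt_affine logsin_intInt (μ * z) μ a b
    have h2 := h1.continuousOn_mul hcont.continuousOn
    have hEq : G = fun y => ω y * Real.log |Real.sin (μ * z + μ * y)| := by
      funext y
      simp only [hG]
      rw [ show μ * (z + y) = μ * z + μ * y by ring]
    rw [hEq]
    exact h2
  -- splitting and reflection
  have key : ∫ y in (0:ℝ)..L, F y
      = (∫ y in (0:ℝ)..(L/2), F y) - ∫ y in (0:ℝ)..(L/2), G y := by
    have hsplit : ∫ y in (0:ℝ)..L, F y
        = (∫ y in (0:ℝ)..(L/2), F y) + ∫ y in (L/2)..L, F y :=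
      (intervalIntegral.integral_add_adjacent_intervals (intF 0 (L/2)) (intF (L/2) L)).symm
    have hsub := intervalIntegral.integral_comp_sub_left (a := (0:ℝ)) (b := L/2) F L
    rw [show L - L/2 = L/2 by ring, sub_zero] at hsub
    have hFG : EqOn (fun y => F (L - y)) (fun y => -G y) (uIcc 0 (L/2)) := by
      intro y hy
      rw [uIcc_of_le (by linarith)] at hy
      have hyL : y ∈ Icc 0 L := ⟨hy.1, by linarith [hy.2]⟩
      simp only [hF, hG]
      rw [hodd y hyL, show μ * (z - (L - y)) = μ * (z + y) - π by rw [← hμL]; ring,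
        Real.sin_sub_pi, abs_neg]
      ring
    have hneg : ∫ y in (0:ℝ)..(L/2), F (L - y) = - ∫ y in (0:ℝ)..(L/2), G y := by
      rw [intervalIntegral.integral_congr hFG, intervalIntegral.integral_neg]
    rw [hsplit, ← hsub, hneg]
    ring
  -- a.e. avoidance of the singular point
  have hz' : ∀ᵐ y : ℝ ∂volume, y ≠ z := by
    filter_upwards [measure_eq_zero_iff_ae_notMem.mp (measure_singleton z)] with y hy
    simpa using hy
  -- angle bounds
  have ha0 : 0 < μ * z := mul_pos hμ hz0
  have ha2 : μ * z < π / 2 := by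
    rw [hμdef, div_mul_eq_mul_div, div_lt_div_iff₀ hL (by norm_num : (0:ℝ) < 2)]
    nlinarith
  have hbval : ∀ y : ℝ, y < L / 2 → μ * y < π / 2 := by
    intro y hy
    rw [hμdef, div_mul_eq_mul_div, div_lt_div_iff₀ hL (by norm_num : (0:ℝ) < 2)]
    nlinarith
  -- pointwise identity a.e.
  have hpt : ∀ᵐ y ∂volume, y ∈ Set.uIoc (0:ℝ) (L/2) → F y - G y = R y := by
    filter_upwards [hz'] with y hyz hy
    rw [uIoc_of_le (by linarith : (0:ℝ) ≤ L/2)] at hy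
    have hb0 : 0 ≤ μ * y := mul_nonneg hμ.le hy.1.le
    by_cases hyh : y = L / 2
    · subst hyh
      have hb : μ * (L / 2) = π / 2 := by rw [hμdef]; field_simp
      have hta : Real.tan (μ * z) ≠ 0 :=
        (Real.tan_pos_of_pos_of_lt_pi_div_two ha0 ha2).ne'
      simp only [hF, hG, hR]
      rw [show μ * (z - L / 2) = -(π/2 - μ * z) by rw [← hb]; ring,
        show μ * (z + L / 2) = μ * z + π/2 by rw [← hb]; ring, hb,
        Real.tan_pi_div_two, Real.sin_neg, Real.sin_pi_div_two_sub,
        Real.sin_add_pi_div_two, abs_neg]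
      simp [div_self hta]
    · have hb2 : μ * y < π / 2 := hbval y (lt_of_le_of_ne hy.2 hyh)
      have hab : μ * z ≠ μ * y := fun h => hyz (mul_left_cancel₀ hμ.ne' h).symm
      have hkey := sin_ratio_eq ha0 ha2 hb0 hb2 hab
      simp only [hF, hG, hR]
      rw [show μ * (z - y) = μ * z - μ * y by ring,
        show μ * (z + y) = μ * z + μ * y by ring, ← hkey]
      ring
  have hFsubG : ∫ y in (0:ℝ)..(L/2), (F y - G y)
      = (∫ y in (0:ℝ)..(L/2), F y) - ∫ y in (0:ℝ)..(L/2), G y :=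
    intervalIntegral.integral_sub (intF 0 (L/2)) (intG 0 (L/2))
  constructor
  · rw [key, ← hFsubG, intervalIntegral.integral_congr_ae hpt]
  · intro hω
    -- strict positivity of ∫ (G - F) over (0, L/2)
    have hpos : ∀ y ∈ Ioo (0:ℝ) (L/2), y ≠ z → 0 < G y - F y := by
      intro y hy hyz
      have hb0 : 0 < μ * y := mul_pos hμ hy.1
      have hb2 : μ * y < π / 2 := hbval y hy.2
      have hab : μ * z ≠ μ * y := fun h => hyz (mul_left_cancel₀ hμ.ne' h).symm
      obtain ⟨habs, hlt⟩ := sin_ratio_lt ha0 ha2 hb0 hb2 hab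
      have hGF : G y - F y
          = ω y * (Real.log |Real.sin (μ * z + μ * y)| - Real.log |Real.sin (μ * z - μ * y)|) := by
        simp only [hF, hG]
        rw [show μ * (z + y) = μ * z + μ * y by ring,
          show μ * (z - y) = μ * z - μ * y by ring]
        ring
      rw [hGF]
      exact mul_pos (hω y hy) (sub_pos.mpr (Real.log_lt_log habs hlt))
    have hint : IntegrableOn (fun y => G y - F y) (Ioo (0:ℝ) (L/2)) volume := by
      have h := (intG 0 (L/2)).sub (intF 0 (L/2))
      rwa [intervalIntegrable_iff_integrableOn_Ioo_of_le (by linarith : (0:ℝ) ≤ L/2)] at h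
    have hae : 0 ≤ᵐ[volume.restrict (Ioo (0:ℝ) (L/2))] fun y => G y - F y := by
      filter_upwards [ae_restrict_mem measurableSet_Ioo,
        hz'.filter_mono (ae_mono Measure.restrict_le_self)] with y hy hyz
      exact (hpos y hy hyz).le
    have hsupp : Ioo (0:ℝ) (L/2) \ {z}
        ⊆ Function.support (fun y => G y - F y) ∩ Ioo (0:ℝ) (L/2) := by
      intro y hy
      exact ⟨(hpos y hy.1 hy.2).ne', hy.1⟩
    have hmeas : 0 < volume (Function.support (fun y => G y - F y) ∩ Ioo (0:ℝ) (L/2)) := by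
      refine lt_of_lt_of_le ?_ (measure_mono hsupp)
      rw [measure_diff_null (measure_singleton z), Real.volume_Ioo]
      simp only [sub_zero]
      exact ENNReal.ofReal_pos.mpr (by linarith)
    have h2' : 0 < ∫ y in Ioo (0:ℝ) (L/2), (G y - F y) :=
      (setIntegral_pos_iff_support_of_nonneg_ae hae hint).mpr hmeas
    have h2 : 0 < ∫ y in (0:ℝ)..(L/2), (G y - F y) := by
      rw [intervalIntegral.integral_of_le (by linarith : (0:ℝ) ≤ L/2),
        MeasureTheory.integral_Ioc_eq_integral_Ioo]
      exact h2'
    have hGF' : ∫ y in (0:ℝ)..(L/2), (G y - F y)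
        = (∫ y in (0:ℝ)..(L/2), G y) - ∫ y in (0:ℝ)..(L/2), F y :=
      intervalIntegral.integral_sub (intG 0 (L/2)) (intF 0 (L/2))
    have hX : (∫ y in (0:ℝ)..L, F y) < 0 := by
      rw [key]
      rw [hGF'] at h2
      linarith
    exact mul_neg_of_pos_of_neg (by positivity) hX
end

section
/- ODE comparison lemma: Let c₀ > 0, let T ∈ (0, ∞], and let H : [0,T) → ℝ be twice differentiable with H(0) = 0, H'(0) ≥ c₀², and H''(t) ≥ (1/2) H(t) H'(t) for all t ∈ [0,T). Then H'(t) ≥ c₀² + H(t)²/4 for all t, and H(t) ≥ 2c₀ tan(c₀ t/2) for all t ∈ [0, min(T, π/c₀)). In particular, T ≤ π/c₀ (H blows up no later than π/c₀). -/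
open Set Real
open scoped ENNReal

lemma mono_aux {f f' : ℝ → ℝ} {b : ℝ} (hb : 0 ≤ b)
    (hd : ∀ t ∈ Icc (0:ℝ) b, HasDerivWithinAt f (f' t) (Ici 0) t)
    (hpos : ∀ t ∈ Icc (0:ℝ) b, 0 ≤ f' t) : f 0 ≤ f b := by
  rcases eq_or_lt_of_le hb with h | h
  · rw [← h]
  · have hcont : ContinuousOn f (Icc 0 b) := fun s hs =>
      ((hd s hs).continuousWithinAt).mono Icc_subset_Ici_self
    have hmono : MonotoneOn f (Icc 0 b) := by
      apply monotoneOn_of_deriv_nonneg (convex_Icc 0 b) hcont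
      · intro x hx
        rw [interior_Icc] at hx
        exact ((hd x ⟨hx.1.le, hx.2.le⟩).hasDerivAt
          (Ici_mem_nhds hx.1)).differentiableAt.differentiableWithinAt
      · intro x hx
        rw [interior_Icc] at hx
        rw [((hd x ⟨hx.1.le, hx.2.le⟩).hasDerivAt (Ici_mem_nhds hx.1)).deriv]
        exact hpos x ⟨hx.1.le, hx.2.le⟩
    exact hmono (left_mem_Icc.2 hb) (right_mem_Icc.2 hb) hb

/-- **ODE comparison lemma.**
Let `c₀ > 0`, `T ∈ (0, ∞]`, and let `H : [0,T) → ℝ` be twice differentiable with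
`H(0) = 0`, `H'(0) ≥ c₀²` and `H'' ≥ (1/2) H H'` on `[0,T)`.  Then
`H' ≥ c₀² + H²/4` on `[0,T)`, `H(t) ≥ 2c₀ tan(c₀ t/2)` for `t ∈ [0, min(T, π/c₀))`, and
consequently `T ≤ π/c₀` (`H` blows up no later than `π/c₀`). -/
theorem ode_comparison_lemma
    (c₀ : ℝ) (hc : 0 < c₀) (T : ℝ≥0∞) (hT : 0 < T)
    (H H' H'' : ℝ → ℝ)
    (hH0 : H 0 = 0) (hH'0 : c₀ ^ 2 ≤ H' 0)
    (hd1 : ∀ t : ℝ, 0 ≤ t → ENNReal.ofReal t < T →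
      HasDerivWithinAt H (H' t) (Ici 0) t)
    (hd2 : ∀ t : ℝ, 0 ≤ t → ENNReal.ofReal t < T →
      HasDerivWithinAt H' (H'' t) (Ici 0) t)
    (hineq : ∀ t : ℝ, 0 ≤ t → ENNReal.ofReal t < T →
      (1 / 2) * H t * H' t ≤ H'' t) :
    (∀ t : ℝ, 0 ≤ t → ENNReal.ofReal t < T → c₀ ^ 2 + (H t) ^ 2 / 4 ≤ H' t) ∧
    (∀ t : ℝ, 0 ≤ t → ENNReal.ofReal t < T → c₀ * t < π →
      2 * c₀ * Real.tan (c₀ * t / 2) ≤ H t) ∧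
    T ≤ ENNReal.ofReal (π / c₀) := by
  -- Part 1
  have part1 : ∀ t : ℝ, 0 ≤ t → ENNReal.ofReal t < T → c₀ ^ 2 + (H t) ^ 2 / 4 ≤ H' t := by
    intro t ht htT
    have key : (fun s => H' s - c₀ ^ 2 - (H s) ^ 2 / 4) 0
        ≤ (fun s => H' s - c₀ ^ 2 - (H s) ^ 2 / 4) t := by
      refine mono_aux (f := fun s => H' s - c₀ ^ 2 - (H s) ^ 2 / 4)
        (f' := fun s => H'' s - (2 * H s ^ 1 * H' s) / 4) ht ?_ ?_
      · intro s hs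
        have hsT : ENNReal.ofReal s < T :=
          lt_of_le_of_lt (ENNReal.ofReal_le_ofReal hs.2) htT
        exact ((hd2 s hs.1 hsT).sub_const _).sub (((hd1 s hs.1 hsT).pow 2).div_const 4)
      · intro s hs
        have hsT : ENNReal.ofReal s < T :=
          lt_of_le_of_lt (ENNReal.ofReal_le_ofReal hs.2) htT
        have := hineq s hs.1 hsT
        simp only [pow_one]
        linarith
    simp only [hH0] at key
    nlinarith [key, hH'0]
  -- Part 2
  have part2 : ∀ t : ℝ, 0 ≤ t → ENNReal.ofReal t < T → c₀ * t < π →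
      2 * c₀ * Real.tan (c₀ * t / 2) ≤ H t := by
    intro t ht htT htπ
    -- φ s = arctan (H s / (2 c₀)), show φ t ≥ c₀ t / 2 via ψ = φ - c₀/2 * s monotone
    have hφ : c₀ * t / 2 ≤ arctan (H t / (2 * c₀)) := by
      have key : (fun s => arctan (H s / (2 * c₀)) - c₀ / 2 * s) 0
          ≤ (fun s => arctan (H s / (2 * c₀)) - c₀ / 2 * s) t := by
        refine mono_aux (f := fun s => arctan (H s / (2 * c₀)) - c₀ / 2 * s)
          (f' := fun s => (1 / (1 + (H s / (2 * c₀)) ^ 2)) * (H' s / (2 * c₀)) - c₀ / 2) ht ?_ ?_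
        · intro s hs
          have hsT : ENNReal.ofReal s < T :=
            lt_of_le_of_lt (ENNReal.ofReal_le_ofReal hs.2) htT
          have h1 : HasDerivWithinAt (fun u => H u / (2 * c₀)) (H' s / (2 * c₀))
              (Ici 0) s := (hd1 s hs.1 hsT).div_const _
          have h2 := (Real.hasDerivAt_arctan (H s / (2 * c₀))).comp_hasDerivWithinAt s h1
          exact h2.sub (by simpa using (hasDerivWithinAt_id s (Ici (0:ℝ))).const_mul (c₀ / 2))
        · intro s hs
          have hsT : ENNReal.ofReal s < T :=
            lt_of_le_of_lt (ENNReal.ofReal_le_ofReal hs.2) htT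
          have h1 := part1 s hs.1 hsT
          have hden : (0:ℝ) < 1 + (H s / (2 * c₀)) ^ 2 := by positivity
          rw [sub_nonneg, ← sub_nonneg]
          have : (1 / (1 + (H s / (2 * c₀)) ^ 2)) * (H' s / (2 * c₀)) - c₀ / 2
              = ((H' s) - (c₀ ^ 2 + (H s) ^ 2 / 4)) / ((1 + (H s / (2 * c₀)) ^ 2) * (2 * c₀)) := by
            field_simp
            ring
          rw [this]
          exact div_nonneg (by linarith) (by positivity)
      simp only [hH0, mul_zero, zero_div, arctan_zero] at key
      linarith [key]
    have htan : Real.tan (c₀ * t / 2) ≤ Real.tan (arctan (H t / (2 * c₀))) := by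
      rcases eq_or_lt_of_le hφ with h | h
      · rw [h]
      · apply le_of_lt
        exact Real.tan_lt_tan_of_nonneg_of_lt_pi_div_two (by positivity)
          (Real.arctan_lt_pi_div_two _) h
    rw [Real.tan_arctan] at htan
    calc 2 * c₀ * Real.tan (c₀ * t / 2) ≤ 2 * c₀ * (H t / (2 * c₀)) := by
          apply mul_le_mul_of_nonneg_left htan (by positivity)
      _ = H t := by field_simp
  refine ⟨part1, part2, ?_⟩
  -- Part 3
  by_contra hcon
  push_neg at hcon
  obtain ⟨r, hr0, hr1, hr2⟩ := (ENNReal.lt_iff_exists_real_btwn).1 hcon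
  have hrpi : π / c₀ < r := (ENNReal.ofReal_lt_ofReal_iff_of_nonneg (by positivity)).1 hr1
  -- H is continuous on [0, r], hence bounded above
  have hcont : ContinuousOn H (Icc 0 r) := by
    intro s hs
    have hsT : ENNReal.ofReal s < T := lt_of_le_of_lt (ENNReal.ofReal_le_ofReal hs.2) hr2
    exact ((hd1 s hs.1 hsT).continuousWithinAt).mono Icc_subset_Ici_self
  obtain ⟨x, hx, hxmax⟩ := (isCompact_Icc : IsCompact (Icc (0:ℝ) r)).exists_isMaxOn
    ⟨0, left_mem_Icc.2 hr0⟩ hcont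
  set M := H x with hM
  have hM0 : 0 ≤ M := by
    have h0 := hxmax (left_mem_Icc.2 hr0)
    simp only [mem_setOf_eq, hH0] at h0
    exact h0
  -- choose s = arctan (M/(2c₀) + 1), t = 2 s / c₀
  set s := arctan (M / (2 * c₀) + 1) with hs
  have hs0 : 0 < s := by
    have := arctan_strictMono (show (0:ℝ) < M / (2 * c₀) + 1 by positivity)
    rw [arctan_zero] at this
    exact this
  have hs2 : s < π / 2 := arctan_lt_pi_div_two _
  set t := 2 * s / c₀ with htdef
  have ht0 : 0 ≤ t := by positivity
  have htlt : t < π / c₀ := by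
    rw [htdef, div_lt_div_iff₀ hc hc]
    nlinarith [hs2, hc]
  have htr : t ≤ r := le_trans htlt.le hrpi.le
  have htT : ENNReal.ofReal t < T := lt_of_le_of_lt (ENNReal.ofReal_le_ofReal htr) hr2
  have htπ : c₀ * t < π := by
    rw [← lt_div_iff₀' hc]
    exact htlt
  have hb := part2 t ht0 htT htπ
  have hst : c₀ * t / 2 = s := by
    field_simp [htdef]
    rw [htdef]
    field_simp
  rw [hst, hs, Real.tan_arctan] at hb
  have hHt : H t ≤ M := hxmax (⟨ht0, htr⟩ : t ∈ Icc (0:ℝ) r)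
  have hfe : 2 * c₀ * (M / (2 * c₀) + 1) = M + 2 * c₀ := by field_simp
  rw [hfe] at hb
  linarith
end

section
/- Blowup from a system of differential inequalities: Let c₀ > 0, T ∈ (0, ∞], and let h₁, h₂ : [0,T) → ℝ be differentiable functions with h₁(0) = 0, h₂(0) ≥ c₀², h₂(t) ≥ 0 for all t, h₁'(t) ≥ h₂(t), and h₂'(t) ≥ (1/2) h₁(t) h₂(t) for all t ∈ [0,T). Then h₁(t) ≥ 2c₀ tan(c₀ t/2) for all t ∈ [0, min(T, π/c₀)); in particular T ≤ π/c₀, i.e., h₁ becomes unbounded no later than π/c₀. -/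
open Set Real
open scoped ENNReal Topology Filter

noncomputable def bgg (c t : ℝ) : ℝ := 2 * c * Real.tan (c * t / 2)
noncomputable def bkk (c t : ℝ) : ℝ := c ^ 2 / Real.cos (c * t / 2) ^ 2

lemma bcos_pos {c t : ℝ} (hc : 0 < c) (ht : 0 ≤ t) (hπ : c * t < π) :
    0 < Real.cos (c * t / 2) := by
  apply Real.cos_pos_of_mem_Ioo
  constructor
  · nlinarith [Real.pi_pos]
  · linarith

lemma bgg_nonneg {c t : ℝ} (hc : 0 < c) (ht : 0 ≤ t) (hπ : c * t < π) :
    0 ≤ bgg c t := by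
  have h1 : 0 ≤ Real.tan (c * t / 2) :=
    Real.tan_nonneg_of_nonneg_of_le_pi_div_two (by nlinarith) (by linarith)
  have : 0 ≤ 2 * c := by linarith
  exact mul_nonneg this h1

lemma bkk_pos {c t : ℝ} (hc : 0 < c) (ht : 0 ≤ t) (hπ : c * t < π) :
    0 < bkk c t :=
  div_pos (pow_pos hc 2) (pow_pos (bcos_pos hc ht hπ) 2)

lemma binner_deriv (c t : ℝ) : HasDerivAt (fun s : ℝ => c * s / 2) (c / 2) t := by
  simpa using ((hasDerivAt_id t).const_mul c).div_const 2

lemma bgg_deriv {c t : ℝ} (h : Real.cos (c * t / 2) ≠ 0) :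
    HasDerivAt (bgg c) (bkk c t) t := by
  have h1 : HasDerivAt (fun s : ℝ => Real.tan (c * s / 2))
      (1 / Real.cos (c * t / 2) ^ 2 * (c / 2)) t :=
    by have := (Real.hasDerivAt_tan h).comp t (binner_deriv c t); exact this
  have h2 := h1.const_mul (2 * c)
  refine h2.congr_deriv ?_
  unfold bkk
  field_simp

lemma bkk_deriv {c t : ℝ} (h : Real.cos (c * t / 2) ≠ 0) :
    HasDerivAt (bkk c) ((1 / 2) * bgg c t * bkk c t) t := by
  have hcos : HasDerivAt (fun s : ℝ => Real.cos (c * s / 2))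
      (-Real.sin (c * t / 2) * (c / 2)) t :=
    by have := (Real.hasDerivAt_cos (c * t / 2)).comp t (binner_deriv c t); exact this
  have hsq := hcos.pow 2
  have hne : Real.cos (c * t / 2) ^ 2 ≠ 0 := pow_ne_zero _ h
  have h3 := (hasDerivAt_const t ((c : ℝ) ^ 2)).div hsq hne
  refine h3.congr_deriv ?_
  simp only [Pi.pow_apply]
  unfold bgg bkk
  rw [Real.tan_eq_sin_div_cos]
  field_simp
  ring

lemma bmono {f f' : ℝ → ℝ} {b : ℝ}
    (hf : ∀ s ∈ Icc (0:ℝ) b, HasDerivWithinAt f (f' s) (Ici 0) s)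
    (h0 : ∀ s ∈ Ioo (0:ℝ) b, 0 ≤ f' s) :
    ∀ s ∈ Icc (0:ℝ) b, f 0 ≤ f s := by
  intro s hs
  have hmono : MonotoneOn f (Icc (0:ℝ) b) := by
    apply monotoneOn_of_deriv_nonneg (convex_Icc 0 b)
    · intro x hx
      exact ((hf x hx).continuousWithinAt).mono Icc_subset_Ici_self
    · intro x hx
      rw [interior_Icc] at hx
      exact (((hf x (Ioo_subset_Icc_self hx)).hasDerivAt
        (Ici_mem_nhds hx.1)).differentiableAt).differentiableWithinAt
    · intro x hx
      rw [interior_Icc] at hx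
      rw [((hf x (Ioo_subset_Icc_self hx)).hasDerivAt (Ici_mem_nhds hx.1)).deriv]
      exact h0 x hx
  exact hmono (left_mem_Icc.mpr (hs.1.trans hs.2)) hs hs.1

lemma bkey (c₀ c : ℝ) (hc0 : 0 < c₀) (hc : 0 < c) (hcc : c < c₀) (T : ℝ≥0∞)
    (h₁ h₂ d₁ d₂ : ℝ → ℝ)
    (h10 : h₁ 0 = 0) (h20 : c₀ ^ 2 ≤ h₂ 0)
    (hd1 : ∀ t : ℝ, 0 ≤ t → ENNReal.ofReal t < T →
      HasDerivWithinAt h₁ (d₁ t) (Ici 0) t)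
    (hd2 : ∀ t : ℝ, 0 ≤ t → ENNReal.ofReal t < T →
      HasDerivWithinAt h₂ (d₂ t) (Ici 0) t)
    (hi1 : ∀ t : ℝ, 0 ≤ t → ENNReal.ofReal t < T → h₂ t ≤ d₁ t)
    (hi2 : ∀ t : ℝ, 0 ≤ t → ENNReal.ofReal t < T →
      (1 / 2) * h₁ t * h₂ t ≤ d₂ t) :
    ∀ t : ℝ, 0 ≤ t → ENNReal.ofReal t < T → c * t < π →
      bkk c t < h₂ t ∧ bgg c t ≤ h₁ t := by
  have hcsq : c ^ 2 < c₀ ^ 2 := by nlinarith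
  have hkk0 : bkk c 0 = c ^ 2 := by simp [bkk]
  have hgg0 : bgg c 0 = 0 := by simp [bgg]
  -- First: the strict inequality for h₂
  have P : ∀ t : ℝ, 0 ≤ t → ENNReal.ofReal t < T → c * t < π → bkk c t < h₂ t := by
    by_contra hP
    push_neg at hP
    obtain ⟨t₁, ht₁0, ht₁T, ht₁π, ht₁⟩ := hP
    have hcond : ∀ s ∈ Icc (0:ℝ) t₁,
        (0 ≤ s ∧ ENNReal.ofReal s < T ∧ c * s < π) := by
      intro s hs
      refine ⟨hs.1, lt_of_le_of_lt (ENNReal.ofReal_le_ofReal hs.2) ht₁T, ?_⟩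
      calc c * s ≤ c * t₁ := mul_le_mul_of_nonneg_left hs.2 hc.le
        _ < π := ht₁π
    have hcosne : ∀ s ∈ Icc (0:ℝ) t₁, Real.cos (c * s / 2) ≠ 0 := by
      intro s hs
      exact (bcos_pos hc hs.1 (hcond s hs).2.2).ne'
    set C : Set ℝ := Icc 0 t₁ ∩ (fun s => bkk c s - h₂ s) ⁻¹' Ici 0 with hC
    have hkkcont : ContinuousOn (fun s => bkk c s) (Icc (0:ℝ) t₁) := by
      apply ContinuousOn.div continuousOn_const
      · exact ((Real.continuous_cos.comp
          (((continuous_const.mul continuous_id : Continuous fun s : ℝ => c * s)).div_const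
            2)).pow 2).continuousOn
      · intro s hs
        exact pow_ne_zero 2 (hcosne s hs)
    have h2cont : ContinuousOn h₂ (Icc (0:ℝ) t₁) := fun s hs =>
      ((hd2 s hs.1 (hcond s hs).2.1).continuousWithinAt).mono Icc_subset_Ici_self
    have hCclosed : IsClosed C :=
      (hkkcont.sub h2cont).preimage_isClosed_of_isClosed isClosed_Icc isClosed_Ici
    have ht₁C : t₁ ∈ C := ⟨⟨ht₁0, le_refl _⟩, by simp [sub_nonneg]; linarith⟩
    have hbdd : BddBelow C := ⟨0, fun x hx => hx.1.1⟩
    have ht₀ := hCclosed.csInf_mem ⟨t₁, ht₁C⟩ hbdd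
    set t₀ := sInf C with ht₀def
    have ht₀Icc : t₀ ∈ Icc (0:ℝ) t₁ := ht₀.1
    have ht₀le : h₂ t₀ ≤ bkk c t₀ := by
      have := ht₀.2
      simp only [mem_preimage, mem_Ici, sub_nonneg] at this
      exact this
    have ht₀pos : 0 < t₀ := by
      rcases lt_or_eq_of_le ht₀Icc.1 with h | h
      · exact h
      · exfalso
        rw [← h] at ht₀le
        rw [hkk0] at ht₀le
        linarith
    have hcond₀ : ∀ s ∈ Icc (0:ℝ) t₀, s ∈ Icc (0:ℝ) t₁ := fun s hs =>
      ⟨hs.1, hs.2.trans ht₀Icc.2⟩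
    have hlt : ∀ s : ℝ, 0 ≤ s → s < t₀ → bkk c s < h₂ s := by
      intro s hs hst
      by_contra hcon
      push_neg at hcon
      have hsC : s ∈ C := ⟨⟨hs, hst.le.trans ht₀Icc.2⟩, by
        simp only [mem_preimage, mem_Ici, sub_nonneg]; exact hcon⟩
      exact absurd (csInf_le hbdd hsC) (not_le.mpr hst)
    -- h₁ ≥ g on [0, t₀]
    have hF := bmono (f := fun s => h₁ s - bgg c s) (f' := fun s => d₁ s - bkk c s)
      (b := t₀)
      (fun s hs => by
        have hs' := hcond₀ s hs
        exact ((hd1 s hs.1 (hcond s hs').2.1).sub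
          ((bgg_deriv (hcosne s hs')).hasDerivWithinAt)))
      (fun s hs => by
        have hs' := hcond₀ s (Ioo_subset_Icc_self hs)
        have h1 := hi1 s hs.1.le (hcond s hs').2.1
        have h2 := hlt s hs.1.le hs.2
        simp only [sub_nonneg]
        linarith)
    have hF' : ∀ s ∈ Icc (0:ℝ) t₀, bgg c s ≤ h₁ s := by
      intro s hs
      have := hF s hs
      simp only [h10, hgg0, sub_zero, sub_self] at this
      linarith
    -- h₂ - k monotone on [0, t₀]
    have hG := bmono (f := fun s => h₂ s - bkk c s)
      (f' := fun s => d₂ s - (1 / 2) * bgg c s * bkk c s) (b := t₀)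
      (fun s hs => by
        have hs' := hcond₀ s hs
        exact ((hd2 s hs.1 (hcond s hs').2.1).sub
          ((bkk_deriv (hcosne s hs')).hasDerivWithinAt)))
      (fun s hs => by
        have hsIcc := Ioo_subset_Icc_self hs
        have hs' := hcond₀ s hsIcc
        have hcs := (hcond s hs').2.2
        have h1 := hF' s hsIcc
        have h2 := (hlt s hs.1.le hs.2).le
        have hggn := bgg_nonneg hc hs.1.le hcs
        have hkkn := (bkk_pos hc hs.1.le hcs).le
        have hmul : bgg c s * bkk c s ≤ h₁ s * h₂ s :=
          mul_le_mul h1 h2 hkkn (hggn.trans h1)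
        have h3 := hi2 s hs.1.le (hcond s hs').2.1
        simp only [sub_nonneg]
        linarith)
    have hGt := hG t₀ (right_mem_Icc.mpr ht₀pos.le)
    simp only [hkk0] at hGt
    linarith
  -- Second: conclude for h₁
  intro t ht0 htT htπ
  refine ⟨P t ht0 htT htπ, ?_⟩
  have hcond : ∀ s ∈ Icc (0:ℝ) t,
      (0 ≤ s ∧ ENNReal.ofReal s < T ∧ c * s < π) := by
    intro s hs
    refine ⟨hs.1, lt_of_le_of_lt (ENNReal.ofReal_le_ofReal hs.2) htT, ?_⟩
    calc c * s ≤ c * t := mul_le_mul_of_nonneg_left hs.2 hc.le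
      _ < π := htπ
  have hF := bmono (f := fun s => h₁ s - bgg c s) (f' := fun s => d₁ s - bkk c s)
    (b := t)
    (fun s hs => (hd1 s hs.1 (hcond s hs).2.1).sub
      ((bgg_deriv (bcos_pos hc hs.1 (hcond s hs).2.2).ne').hasDerivWithinAt))
    (fun s hs => by
      have hs' := Ioo_subset_Icc_self hs
      have h1 := hi1 s hs.1.le (hcond s hs').2.1
      have h2 := P s hs.1.le (hcond s hs').2.1 (hcond s hs').2.2
      simp only [sub_nonneg]
      linarith)
  have := hF t (right_mem_Icc.mpr ht0)
  have hgg0 : bgg c 0 = 0 := by simp [bgg]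
  simp only [h10, hgg0, sub_zero, sub_self] at this
  linarith

/-- **Blowup from a system of differential inequalities.**
Let `c₀ > 0`, `T ∈ (0, ∞]`, and let `h₁, h₂ : [0,T) → ℝ` be differentiable with
`h₁(0) = 0`, `h₂(0) ≥ c₀²`, `h₂ ≥ 0`, `h₁' ≥ h₂` and `h₂' ≥ (1/2) h₁ h₂` on `[0,T)`.
Then `h₁(t) ≥ 2c₀ tan(c₀ t/2)` for all `t ∈ [0, min(T, π/c₀))`; in particular
`T ≤ π/c₀`, i.e. `h₁` becomes unbounded no later than `π/c₀`. -/
theorem blowup_from_differential_inequalities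
    (c₀ : ℝ) (hc : 0 < c₀) (T : ℝ≥0∞) (hT : 0 < T)
    (h₁ h₂ d₁ d₂ : ℝ → ℝ)
    (h10 : h₁ 0 = 0) (h20 : c₀ ^ 2 ≤ h₂ 0)
    (h2nonneg : ∀ t : ℝ, 0 ≤ t → ENNReal.ofReal t < T → 0 ≤ h₂ t)
    (hd1 : ∀ t : ℝ, 0 ≤ t → ENNReal.ofReal t < T →
      HasDerivWithinAt h₁ (d₁ t) (Ici 0) t)
    (hd2 : ∀ t : ℝ, 0 ≤ t → ENNReal.ofReal t < T →
      HasDerivWithinAt h₂ (d₂ t) (Ici 0) t)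
    (hi1 : ∀ t : ℝ, 0 ≤ t → ENNReal.ofReal t < T → h₂ t ≤ d₁ t)
    (hi2 : ∀ t : ℝ, 0 ≤ t → ENNReal.ofReal t < T →
      (1 / 2) * h₁ t * h₂ t ≤ d₂ t) :
    (∀ t : ℝ, 0 ≤ t → ENNReal.ofReal t < T → c₀ * t < π →
      2 * c₀ * Real.tan (c₀ * t / 2) ≤ h₁ t) ∧
    T ≤ ENNReal.ofReal (π / c₀) := by
  have key := fun (c : ℝ) (hc' : 0 < c) (hcc : c < c₀) =>
    bkey c₀ c hc hc' hcc T h₁ h₂ d₁ d₂ h10 h20 hd1 hd2 hi1 hi2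
  constructor
  · intro t ht0 htT htπ
    have hev : ∀ᶠ c in 𝓝[<] c₀, bgg c t ≤ h₁ t := by
      filter_upwards [Ioo_mem_nhdsLT_of_mem
        (⟨hc, le_refl c₀⟩ : c₀ ∈ Ioc (0:ℝ) c₀)] with c hcm
      refine (key c hcm.1 hcm.2 t ht0 htT ?_).2
      calc c * t ≤ c₀ * t := mul_le_mul_of_nonneg_right hcm.2.le ht0
        _ < π := htπ
    have hcont : ContinuousAt (fun c : ℝ => bgg c t) c₀ := by
      unfold bgg
      have hin : ContinuousAt (fun c : ℝ => c * t / 2) c₀ :=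
        (continuousAt_id.mul continuousAt_const).div_const 2
      have htan : ContinuousAt (fun c : ℝ => Real.tan (c * t / 2)) c₀ :=
        ContinuousAt.comp (g := Real.tan) (f := fun c : ℝ => c * t / 2)
          (Real.continuousAt_tan.mpr (bcos_pos hc ht0 htπ).ne') hin
      exact (continuousAt_const.mul continuousAt_id).mul htan
    have htend : Filter.Tendsto (fun c : ℝ => bgg c t) (𝓝[<] c₀) (𝓝 (bgg c₀ t)) :=
      hcont.continuousWithinAt
    exact le_of_tendsto htend hev
  · by_contra hcon
    push_neg at hcon
    obtain ⟨r, hr0, hr1, hr2⟩ := ENNReal.lt_iff_exists_real_btwn.mp hcon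
    have hπc : 0 < π / c₀ := div_pos Real.pi_pos hc
    have hrgt : π / c₀ < r := by
      by_contra h
      push_neg at h
      exact absurd hr1 (not_lt.mpr (ENNReal.ofReal_le_ofReal h))
    have hrpos : 0 < r := hπc.trans hrgt
    have h1cont : ContinuousOn h₁ (Icc (0:ℝ) r) := fun s hs =>
      ((hd1 s hs.1 (lt_of_le_of_lt (ENNReal.ofReal_le_ofReal hs.2)
        hr2)).continuousWithinAt).mono Icc_subset_Ici_self
    obtain ⟨x, hx, hmax⟩ := isCompact_Icc.exists_isMaxOn
      (nonempty_Icc.mpr hrpos.le) h1cont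
    set M := h₁ x with hMdef
    have hM0 : 0 ≤ M := by
      have h := hmax (left_mem_Icc.mpr hrpos.le)
      simp only [mem_setOf_eq, h10] at h
      exact h
    have hπr : π / r < c₀ := by
      rw [div_lt_iff₀ hrpos]
      have := (div_lt_iff₀ hc).mp hrgt
      linarith
    set c : ℝ := (π / r + c₀) / 2 with hcdef
    have hcpos : 0 < c := by
      have : 0 < π / r := div_pos Real.pi_pos hrpos
      rw [hcdef]; linarith
    have hclt : c < c₀ := by rw [hcdef]; linarith
    have hπrc : π / r < c := by rw [hcdef]; linarith
    have hπcr : π / c < r := by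
      rw [div_lt_iff₀ hcpos]
      have := (div_lt_iff₀ hrpos).mp hπrc
      linarith
    set θ := Real.arctan ((M + 1) / (2 * c)) with hθdef
    have hθ0 : 0 ≤ θ := by
      rw [hθdef, ← Real.arctan_zero]
      exact Real.arctan_strictMono.monotone (by positivity)
    have hθπ : θ < π / 2 := Real.arctan_lt_pi_div_two _
    set s : ℝ := 2 * θ / c with hsdef
    have hs0 : 0 ≤ s := by positivity
    have hcs : c * s = 2 * θ := by rw [hsdef]; field_simp
    have hsπ : c * s < π := by rw [hcs]; linarith
    have hsr : s < r := by
      have h1 : s < π / c := by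
        rw [hsdef, div_lt_div_iff₀ hcpos hcpos]
        nlinarith
      linarith
    have hfact : bgg c s = M + 1 := by
      unfold bgg
      rw [show c * s / 2 = θ by rw [hcs]; ring, hθdef, Real.tan_arctan]
      field_simp
    have hsT : ENNReal.ofReal s < T :=
      lt_of_le_of_lt (ENNReal.ofReal_le_ofReal hsr.le) hr2
    have hkey := (key c hcpos hclt s hs0 hsT hsπ).2
    have hmax' := hmax ⟨hs0, hsr.le⟩
    rw [hfact] at hkey
    simp only [mem_setOf_eq, ← hMdef] at hmax'
    linarith
end
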